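/- The 4×4 matrix A with diagonal entries 2, entries a_{12}=a_{23}=a_{34}=a_{14}=1 (and symmetric), and zeros elsewhere, is doubly nonnegative of rank 3 but is not completely positive with cp-rank 3; in fact any CP factorization A = B^T B with B ≥ 0 requires B to have at least 4 rows. -/

import Mathlib

open Matrix BigOperators

def Matrix.IsCP {n : Type*} [Fintype n] (A : Matrix n n ℝ) : Prop :=
  ∃ (m : ℕ) (B : Matrix (Fin m) n ℝ), (∀ i j, 0 ≤ B i j) ∧ A = Bᵀ * B

noncomputable def Matrix.cpRank {n : Type*} [Fintype n] (A : Matrix n n ℝ) : ℕ :=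
  sInf {m | ∃ B : Matrix (Fin m) n ℝ, (∀ i j, 0 ≤ B i j) ∧ A = Bᵀ * B}

lemma factA : (!![2,1,0,1; 1,2,1,0; 0,1,2,1; 1,0,1,2] : Matrix (Fin 4) (Fin 4) ℝ)
    = (!![1,1,0,0; 0,1,1,0; 0,0,1,1; 1,0,0,1] : Matrix (Fin 4) (Fin 4) ℝ)ᵀ
      * !![1,1,0,0; 0,1,1,0; 0,0,1,1; 1,0,0,1] := by
  ext i j
  fin_cases i <;> fin_cases j <;>
    norm_num [Matrix.mul_apply, Fin.sum_univ_succ]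

lemma main_lemma : ∀ (m : ℕ) (B : Matrix (Fin m) (Fin 4) ℝ),
    (∀ i j, 0 ≤ B i j) →
    (!![2,1,0,1; 1,2,1,0; 0,1,2,1; 1,0,1,2] : Matrix (Fin 4) (Fin 4) ℝ) = Bᵀ * B → 4 ≤ m := by
  intro m B hB hA
  have key : ∀ j k : Fin 4, ∑ i, B i j * B i k
      = !![2,1,0,1; 1,2,1,0; 0,1,2,1; 1,0,1,2] j k := by
    intro j k
    rw [hA, Matrix.mul_apply]
    simp [Matrix.transpose_apply]
  -- positive intersections
  have pos : ∀ j k : Fin 4,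
      (!![2,1,0,1; 1,2,1,0; 0,1,2,1; 1,0,1,2] : Matrix (Fin 4) (Fin 4) ℝ) j k = 1 →
      ∃ i, 0 < B i j ∧ 0 < B i k := by
    intro j k h1
    by_contra hc
    push_neg at hc
    have : ∑ i, B i j * B i k = 0 := by
      apply Finset.sum_eq_zero
      intro i _
      rcases lt_or_eq_of_le (hB i j) with hj | hj
      · have := hc i hj
        have : B i k = 0 := le_antisymm this (hB i k)
        simp [this]
      · simp [← hj]
    rw [key j k, h1] at this; norm_num at this
  have zero : ∀ j k : Fin 4,
      (!![2,1,0,1; 1,2,1,0; 0,1,2,1; 1,0,1,2] : Matrix (Fin 4) (Fin 4) ℝ) j k = 0 →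
      ∀ i, ¬ (0 < B i j ∧ 0 < B i k) := by
    intro j k h0 i ⟨hj, hk⟩
    have hs : ∑ i, B i j * B i k = 0 := by rw [key j k, h0]
    have := (Finset.sum_eq_zero_iff_of_nonneg (fun i _ => mul_nonneg (hB i j) (hB i k))).mp hs i
      (Finset.mem_univ i)
    nlinarith
  obtain ⟨i, hi0, hi1⟩ := pos 0 1 (by norm_num)
  obtain ⟨j, hj1, hj2⟩ := pos 1 2 (by rfl)
  obtain ⟨k, hk2, hk3⟩ := pos 2 3 (by rfl)
  obtain ⟨l, hl3, hl0⟩ := pos 3 0 (by rfl)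
  have h02 := zero 0 2 (by rfl)
  have h13 := zero 1 3 (by rfl)
  have hij : i ≠ j := fun h => h02 i ⟨hi0, h ▸ hj2⟩
  have hik : i ≠ k := fun h => h13 i ⟨hi1, h ▸ hk3⟩
  have hil : i ≠ l := fun h => h13 i ⟨hi1, h ▸ hl3⟩
  have hjk : j ≠ k := fun h => h13 j ⟨hj1, h ▸ hk3⟩
  have hjl : j ≠ l := fun h => h02 l ⟨hl0, h ▸ hj2⟩
  have hkl : k ≠ l := fun h => h02 l ⟨hl0, h ▸ hk2⟩
  have : ({i, j, k, l} : Finset (Fin m)).card = 4 := by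
    rw [Finset.card_insert_of_notMem (by simp [hij, hik, hil]),
      Finset.card_insert_of_notMem (by simp [hjk, hjl]),
      Finset.card_insert_of_notMem (by simp [hkl]), Finset.card_singleton]
  calc 4 = ({i, j, k, l} : Finset (Fin m)).card := this.symm
    _ ≤ Fintype.card (Fin m) := Finset.card_le_univ _
    _ = m := Fintype.card_fin m

theorem stmt_10 :
    let A : Matrix (Fin 4) (Fin 4) ℝ := !![2,1,0,1; 1,2,1,0; 0,1,2,1; 1,0,1,2]
    (∀ i j, 0 ≤ A i j) ∧ A.PosSemidef ∧ A.rank = 3 ∧ A.cpRank ≠ 3 ∧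
      ∀ (m : ℕ) (B : Matrix (Fin m) (Fin 4) ℝ),
        (∀ i j, 0 ≤ B i j) → A = Bᵀ * B → 4 ≤ m := by
  intro A
  refine ⟨?_, ?_, ?_, ?_, main_lemma⟩
  · intro i j; fin_cases i <;> fin_cases j <;> norm_num [A]
  · rw [show A = (!![1,1,0,0; 0,1,1,0; 0,0,1,1; 1,0,0,1] : Matrix (Fin 4) (Fin 4) ℝ)ᴴ
        * !![1,1,0,0; 0,1,1,0; 0,0,1,1; 1,0,0,1] from factA]
    exact Matrix.posSemidef_conjTranspose_mul_self _
  · -- rank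
    have hC : A = (!![1,1,1,1; 1,0,-1,0; 0,1,0,-1] : Matrix (Fin 3) (Fin 4) ℝ)ᵀ
        * (!![1,1,1,1; 1,0,-1,0; 0,1,0,-1] : Matrix (Fin 3) (Fin 4) ℝ) := by
      ext i j
      fin_cases i <;> fin_cases j <;>
        norm_num [Matrix.mul_apply, Fin.sum_univ_succ, A]
    rw [hC, Matrix.rank_transpose_mul_self]
    set C : Matrix (Fin 3) (Fin 4) ℝ := !![1,1,1,1; 1,0,-1,0; 0,1,0,-1]
    have h1 : C.rank ≤ 3 := by
      simpa using C.rank_le_card_height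
    have h2 : 3 ≤ C.rank := by
      have : (C * Cᵀ).rank = 3 := by
        apply Matrix.rank_of_isUnit
        rw [Matrix.isUnit_iff_isUnit_det]
        have hCC : C * Cᵀ = !![4,0,0; 0,2,0; 0,0,2] := by
          ext i j
          fin_cases i <;> fin_cases j <;>
            norm_num [Matrix.mul_apply, Fin.sum_univ_succ, Matrix.vecHead, Matrix.vecTail, Matrix.transpose_apply, C]
        rw [hCC]
        norm_num [Matrix.det_fin_three, Matrix.cons_val_two]
      calc 3 = (C * Cᵀ).rank := this.symm
        _ ≤ C.rank := Matrix.rank_mul_le_left _ _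
    omega
  · intro h3
    have hne : {m | ∃ B : Matrix (Fin m) (Fin 4) ℝ, (∀ i j, 0 ≤ B i j) ∧ A = Bᵀ * B}.Nonempty := by
      exact ⟨4, !![1,1,0,0; 0,1,1,0; 0,0,1,1; 1,0,0,1], by intro i j; fin_cases i <;> fin_cases j <;> norm_num, factA⟩
    have := Nat.sInf_mem hne
    rw [show sInf {m | ∃ B : Matrix (Fin m) (Fin 4) ℝ, (∀ i j, 0 ≤ B i j) ∧ A = Bᵀ * B}
        = A.cpRank from rfl, h3] at this
    obtain ⟨B, hB, hAB⟩ := this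
    have := main_lemma 3 B hB hAB
    omega
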